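/- Application of a unary inclusion dependency in the chase never causes a chase failure: if the ID chase rule is applied for an ID r1[k1] ⊆ r2[k2] involving a single attribute on each side, the newly added fact has fresh constants in all positions except possibly position k2, hence any key-dependency violation it creates can be repaired by the KD chase rule without equating two distinct non-fresh constants. -/

import Mathlib

/-- Constants: `Sum.inl` = non-fresh constants (dom), `Sum.inr` = fresh constants (Γ_f). -/
abbrev Const := ℕ ⊕ ℕ

def nonFresh (c : Const) : Prop := ∃ n, c = Sum.inl n
def isFresh (c : Const) : Prop := ∃ n, c = Sum.inr n

/-- An atom over an argument type `α` (for facts, `α = Const`; for query bodies, terms). -/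
structure GAtom (α : Type) where
  rel : String
  args : List α
deriving DecidableEq

abbrev Atom := GAtom Const
/-- A (possibly infinite) database instance is a set of facts. -/
abbrev DB := Set Atom

def mapAtom (f : Const → Const) (a : Atom) : Atom := ⟨a.rel, a.args.map f⟩

/-- `μ` is a homomorphism from the set of atoms `D1` to `D2` (as a map on constants). -/
def isHom (μ : Const → Const) (D1 D2 : DB) : Prop := ∀ a ∈ D1, mapAtom μ a ∈ D2

/-- `μ` fixes all non-fresh constants. -/
def homFix (μ : Const → Const) : Prop := ∀ n : ℕ, μ (Sum.inl n) = Sum.inl n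

/-- `c` occurs as an argument of some fact of `D`. -/
def occursC (c : Const) (D : DB) : Prop := ∃ a ∈ D, c ∈ a.args

/-- a fact `t'` added by the chase rule of a unary inclusion
dependency `r1[k1] ⊆ r2[k2]` has (pairwise distinct) fresh constants, not
occurring in the current instance `S`, in all positions other than `k2`.
Consequently, for any fact `s` of `S` agreeing with `t'` on a key position `k`,
no position of `t'` and `s` holds two distinct non-fresh constants, and the two
facts can be merged by a map that never changes a non-fresh constant: the KD
chase rule application cannot fail. -/
theorem unary_id_application_never_fails
    (S : DB) (t' : Atom) (k2 : ℕ)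
    (hfresh : ∀ i, i < t'.args.length → i ≠ k2 →
      ∃ c, t'.args[i]? = some c ∧ isFresh c ∧ ¬ occursC c S)
    (hdist : ∀ i j, i < t'.args.length → j < t'.args.length → i ≠ j → i ≠ k2 → j ≠ k2 →
      t'.args[i]? ≠ t'.args[j]?) :
    ∀ s ∈ S, s.rel = t'.rel → s.args.length = t'.args.length →
      ∀ k : ℕ, (∃ c, t'.args[k]? = some c ∧ s.args[k]? = some c) →
      (∀ i : ℕ, ¬ ∃ u v : Const, t'.args[i]? = some u ∧ s.args[i]? = some v ∧
        nonFresh u ∧ nonFresh v ∧ u ≠ v) ∧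
      (∃ μ : Const → Const, (∀ c, ¬ isFresh c → μ c = c) ∧ mapAtom μ t' = mapAtom μ s) := by

  intro s hs hrel hlen k hk
  obtain ⟨c, hkt, hks⟩ := hk
  have hklen : k < t'.args.length := by
    by_contra h
    rw [List.getElem?_eq_none_iff.mpr (le_of_not_gt h)] at hkt
    exact nomatch hkt
  have hkk2 : k = k2 := by
    by_contra hne
    obtain ⟨c', hc', hfr, hocc⟩ := hfresh k hklen hne
    rw [hkt] at hc'
    injection hc' with h'
    subst h'
    exact hocc ⟨s, hs, List.mem_of_getElem? hks⟩
  subst hkk2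
  have hk2 : t'.args[k]? = s.args[k]? := by rw [hkt, hks]
  set p : Const → ℕ → Bool := fun c i => decide (i ≠ k) && decide (t'.args[i]? = some c) with hp
  set μ : Const → Const := fun c =>
    match (List.range t'.args.length).find? (p c) with
    | some i => (s.args[i]?).getD c
    | none => c with hμ
  -- basic fact about find? returning some
  have hsome : ∀ (c : Const) (j : ℕ),
      (List.range t'.args.length).find? (p c) = some j →
      j ≠ k ∧ t'.args[j]? = some c ∧ j < t'.args.length := by
    intro c j hj
    have h1 := List.find?_some hj
    have h2 := List.mem_of_find?_eq_some hj
    rw [hp] at h1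
    simp only [Bool.and_eq_true, decide_eq_true_eq] at h1
    exact ⟨h1.1, h1.2, List.mem_range.mp h2⟩
  constructor
  · rintro i ⟨u, v, htu, hsv, ⟨nu, hu⟩, ⟨nv, hv⟩, huv⟩
    have hi : i < t'.args.length := by
      by_contra h
      rw [List.getElem?_eq_none_iff.mpr (le_of_not_gt h)] at htu
      exact nomatch htu
    by_cases hik : i = k
    · subst hik
      rw [hk2, hsv] at htu
      exact huv (Option.some.inj htu).symm
    · obtain ⟨c', hc', ⟨m, hm⟩, _⟩ := hfresh i hi hik
      rw [htu] at hc'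
      injection hc' with h'
      subst h'
      rw [hu] at hm
      exact nomatch hm
  · refine ⟨μ, ?_, ?_⟩
    · intro c hc
      rw [hμ]
      simp only
      cases hfind : (List.range t'.args.length).find? (p c) with
      | none => rfl
      | some j =>
        obtain ⟨hjk, hjc, hjlen⟩ := hsome c j hfind
        obtain ⟨c', hc', hfr, _⟩ := hfresh j hjlen hjk
        rw [hjc] at hc'
        injection hc' with h'
        subst h'
        exact absurd hfr hc
    · have hargs : t'.args.map μ = s.args.map μ := by
        apply List.ext_getElem?
        intro n
        rw [List.getElem?_map, List.getElem?_map]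
        by_cases hn : n < t'.args.length
        · by_cases hnk : n = k
          · subst hnk; rw [hk2]
          · obtain ⟨ct, hct, hctf, hctocc⟩ := hfresh n hn hnk
            have hsn : ∃ cs, s.args[n]? = some cs := by
              rw [List.getElem?_eq_getElem (by omega : n < s.args.length)]
              exact ⟨_, rfl⟩
            obtain ⟨cs, hcs⟩ := hsn
            rw [hct, hcs]
            -- μ ct = cs
            have h1 : μ ct = cs := by
              rw [hμ]; simp only
              cases hfind : (List.range t'.args.length).find? (p ct) with
              | none =>
                exfalso
                have := List.find?_eq_none.mp hfind n (List.mem_range.mpr hn)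
                rw [hp] at this
                simp only [Bool.and_eq_true, decide_eq_true_eq, not_and] at this
                exact this hnk hct
              | some j =>
                obtain ⟨hjk, hjc, hjlen⟩ := hsome ct j hfind
                have hjn : j = n := by
                  by_contra hne
                  exact hdist j n hjlen hn hne hjk hnk (by rw [hjc, hct])
                show (s.args[j]?).getD ct = cs
                rw [hjn, hcs]
                rfl
            -- μ cs = cs
            have h2 : μ cs = cs := by
              rw [hμ]; simp only
              cases hfind : (List.range t'.args.length).find? (p cs) with
              | none => rfl
              | some j =>
                exfalso
                obtain ⟨hjk, hjc, hjlen⟩ := hsome cs j hfind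
                obtain ⟨c', hc', hfr, hocc⟩ := hfresh j hjlen hjk
                rw [hjc] at hc'
                injection hc' with h'
                subst h'
                exact hocc ⟨s, hs, List.mem_of_getElem? hcs⟩
            rw [Option.map_some, Option.map_some, h1, h2]
        · rw [List.getElem?_eq_none_iff.mpr (le_of_not_gt hn),
              List.getElem?_eq_none_iff.mpr (by omega : s.args.length ≤ n)]
      show (⟨t'.rel, t'.args.map μ⟩ : Atom) = ⟨s.rel, s.args.map μ⟩
      rw [hrel, hargs]
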